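/- For all n ≥ k ≥ 1, there exists a family of at most ⌈ln(C(n,k))·(k^k/k!)⌉ + 1 functions from [n] to [k] such that for every k-element subset A of [n], at least one function in the family is injective on A. -/

import Mathlib

open Finset

lemma count_inj (n k : ℕ) (A : Finset (Fin n)) (hA : A.card = k) :
    Fintype.card {g : Fin n → Fin k // Set.InjOn g ↑A} = k.factorial * k ^ (n - k) := by
  have e : {g : Fin n → Fin k // Set.InjOn g ↑A} ≃ (↥A ↪ Fin k) × (↥(Aᶜ) → Fin k) :=
    { toFun := fun g => (⟨fun a => g.1 a, fun a b h => Subtype.ext (g.2 (by simp) (by simp) h)⟩,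
        fun a => g.1 a)
      invFun := fun fh => ⟨fun x => if hx : x ∈ A then fh.1 ⟨x, hx⟩ else fh.2 ⟨x, by simpa⟩, by
        intro a ha b hb h
        simp only [Finset.mem_coe] at ha hb
        simp only [dif_pos ha, dif_pos hb] at h
        exact congrArg Subtype.val (fh.1.injective h)⟩
      left_inv := by
        intro g; ext x; by_cases hx : x ∈ A <;> simp [hx] <;> rfl
      right_inv := by
        intro fh
        refine Prod.ext ?_ ?_
        · ext a; simp
        · ext a
          have h2 : (a : Fin n) ∉ A := Finset.mem_compl.mp a.2
          simp [h2] }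
  rw [Fintype.card_congr e, Fintype.card_prod, Fintype.card_embedding_eq, Fintype.card_fun]
  simp [hA, Finset.card_compl, Nat.descFactorial_self]

lemma key_ineq (n k : ℕ) (hk : 1 ≤ k) (hkn : k ≤ n) :
    (n.choose k) *
      (k ^ n - k.factorial * k ^ (n - k)) ^
        (⌈Real.log (n.choose k) * ((k : ℝ) ^ k / (k.factorial : ℝ))⌉₊ + 1) <
    (k ^ n) ^ (⌈Real.log (n.choose k) * ((k : ℝ) ^ k / (k.factorial : ℝ))⌉₊ + 1) := by
  set T : ℕ := ⌈Real.log (n.choose k) * ((k : ℝ) ^ k / (k.factorial : ℝ))⌉₊ + 1 with hT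
  have hGle : k.factorial * k ^ (n - k) ≤ k ^ n := by
    calc k.factorial * k ^ (n - k) ≤ k ^ k * k ^ (n - k) :=
          Nat.mul_le_mul_right _ (Nat.factorial_le_pow k)
      _ = k ^ n := by rw [← pow_add, Nat.add_sub_cancel' hkn]
  rw [← Nat.cast_lt (α := ℝ)]
  push_cast [Nat.cast_sub hGle]
  set C : ℝ := (n.choose k : ℝ) with hCdef
  set p : ℝ := (k.factorial : ℝ) / (k : ℝ) ^ k with hpdef
  have hk0 : (0 : ℝ) < (k : ℝ) := by exact_mod_cast hk
  have hkk : (0 : ℝ) < (k : ℝ) ^ k := pow_pos hk0 k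
  have hfac : (0 : ℝ) < (k.factorial : ℝ) := by exact_mod_cast k.factorial_pos
  have hp0 : 0 < p := div_pos hfac hkk
  have hp1 : p ≤ 1 := by
    rw [hpdef, div_le_one hkk]
    exact_mod_cast Nat.factorial_le_pow k
  have hC1 : (1 : ℝ) ≤ C := by
    rw [hCdef]; exact_mod_cast Nat.one_le_iff_ne_zero.mpr (Nat.choose_pos hkn).ne'
  have hC0 : (0 : ℝ) < C := lt_of_lt_of_le one_pos hC1
  have hM : (0 : ℝ) < (k : ℝ) ^ n := pow_pos hk0 n
  have hsplit : (k : ℝ) ^ n = (k : ℝ) ^ k * (k : ℝ) ^ (n - k) := by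
    rw [← pow_add, Nat.add_sub_cancel' hkn]
  have hid : (k : ℝ) ^ n - (k.factorial : ℝ) * (k : ℝ) ^ (n - k) = (k : ℝ) ^ n * (1 - p) := by
    rw [hpdef]; field_simp; rw [hsplit]; ring
  have hTle : Real.log C / p + 1 ≤ (T : ℝ) := by
    have h1 : Real.log C * ((k : ℝ) ^ k / (k.factorial : ℝ)) = Real.log C / p := by
      rw [hpdef]; field_simp
    have h0 := Nat.le_ceil (Real.log C * ((k : ℝ) ^ k / (k.factorial : ℝ)))
    rw [← h1]
    push_cast [hT]
    linarith
  have hlog : Real.log C < p * T := by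
    have h2 : p * (Real.log C / p + 1) = Real.log C + p := by field_simp
    nlinarith [mul_le_mul_of_nonneg_left hTle hp0.le]
  have hmain : C * (1 - p) ^ T < 1 := by
    have h3 : (1 - p) ^ T ≤ Real.exp (-p) ^ T :=
      pow_le_pow_left₀ (by linarith) (by linarith [Real.add_one_le_exp (-p)]) T
    have h4 : Real.exp (-p) ^ T = Real.exp (-(p * T)) := by
      rw [← Real.exp_nat_mul]; ring_nf
    have h5 : Real.exp (-(p * T)) < Real.exp (-(Real.log C)) :=
      Real.exp_lt_exp.mpr (by linarith)
    have h6 : Real.exp (-(Real.log C)) = C⁻¹ := by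
      rw [Real.exp_neg, Real.exp_log hC0]
    calc C * (1 - p) ^ T ≤ C * Real.exp (-(p * T)) := by
          rw [← h4]; exact mul_le_mul_of_nonneg_left h3 hC0.le
      _ < C * C⁻¹ := by rw [← h6]; exact mul_lt_mul_of_pos_left h5 hC0
      _ = 1 := mul_inv_cancel₀ hC0.ne'
  calc C * ((k : ℝ) ^ n - (k.factorial : ℝ) * (k : ℝ) ^ (n - k)) ^ T
      = (C * (1 - p) ^ T) * ((k : ℝ) ^ n) ^ T := by rw [hid, mul_pow]; ring
    _ < 1 * ((k : ℝ) ^ n) ^ T := mul_lt_mul_of_pos_right hmain (pow_pos hM T)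
    _ = ((k : ℝ) ^ n) ^ T := one_mul _

theorem stmt2 (n k : ℕ) (hk : 1 ≤ k) (hkn : k ≤ n) :
    ∃ (T : ℕ) (F : Fin T → Fin n → Fin k),
      T ≤ ⌈Real.log (Nat.choose n k : ℝ) * ((k : ℝ) ^ k / (Nat.factorial k : ℝ))⌉₊ + 1 ∧
      ∀ A : Finset (Fin n), A.card = k → ∃ t : Fin T,
        Set.InjOn (F t) (A : Set (Fin n)) := by
    classical
  set T : ℕ := ⌈Real.log (Nat.choose n k : ℝ) * ((k : ℝ) ^ k / (Nat.factorial k : ℝ))⌉₊ + 1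
    with hT
  -- bad families
  set bad : Finset (Fin T → Fin n → Fin k) :=
    univ.filter (fun F => ∃ A ∈ powersetCard k (univ : Finset (Fin n)),
      ∀ t, ¬ Set.InjOn (F t) ↑A) with hbad
  have hcard : bad.card < Fintype.card (Fin T → Fin n → Fin k) := by
    have hsub : bad ⊆ (powersetCard k (univ : Finset (Fin n))).biUnion
        (fun A => univ.filter (fun F : Fin T → Fin n → Fin k => ∀ t, ¬ Set.InjOn (F t) ↑A)) := by
      intro F hF
      rw [hbad, mem_filter] at hF
      obtain ⟨-, A, hA, hAbad⟩ := hF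
      exact mem_biUnion.mpr ⟨A, hA, mem_filter.mpr ⟨mem_univ _, hAbad⟩⟩
    have hAcard : ∀ A ∈ powersetCard k (univ : Finset (Fin n)),
        (univ.filter (fun F : Fin T → Fin n → Fin k => ∀ t, ¬ Set.InjOn (F t) ↑A)).card
          = (k ^ n - k.factorial * k ^ (n - k)) ^ T := by
      intro A hA
      have hAk : A.card = k := (mem_powersetCard_univ.mp hA)
      have hbfn : (univ.filter (fun g : Fin n → Fin k => ¬ Set.InjOn g ↑A)).card
          = k ^ n - k.factorial * k ^ (n - k) := by
        have h1 : (univ.filter (fun g : Fin n → Fin k => Set.InjOn g ↑A)).card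
            = k.factorial * k ^ (n - k) := by
          rw [← Fintype.card_subtype]; exact count_inj n k A hAk
        have h2 := Finset.card_filter_add_card_filter_not
          (s := (univ : Finset (Fin n → Fin k)))
          (p := fun g => Set.InjOn g ↑A)
        have h3 : Fintype.card (Fin n → Fin k) = k ^ n := by
          rw [Fintype.card_fun]; simp
        rw [card_univ, h3, h1] at h2
        omega
      have heq : (univ.filter (fun F : Fin T → Fin n → Fin k => ∀ t, ¬ Set.InjOn (F t) ↑A))
          = Fintype.piFinset (fun _ : Fin T =>
              univ.filter (fun g : Fin n → Fin k => ¬ Set.InjOn g ↑A)) := by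
        ext F
        simp [Fintype.mem_piFinset]
      rw [heq, Fintype.card_piFinset]
      simp [hbfn]
    calc bad.card ≤ ((powersetCard k (univ : Finset (Fin n))).biUnion
          (fun A => univ.filter
            (fun F : Fin T → Fin n → Fin k => ∀ t, ¬ Set.InjOn (F t) ↑A))).card :=
          card_le_card hsub
      _ ≤ ∑ A ∈ powersetCard k (univ : Finset (Fin n)),
            (univ.filter (fun F : Fin T → Fin n → Fin k => ∀ t, ¬ Set.InjOn (F t) ↑A)).card :=
          card_biUnion_le
      _ = (n.choose k) * (k ^ n - k.factorial * k ^ (n - k)) ^ T := by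
          rw [Finset.sum_congr rfl hAcard, Finset.sum_const, Finset.card_powersetCard]
          simp [mul_comm]
      _ < (k ^ n) ^ T := key_ineq n k hk hkn
      _ = Fintype.card (Fin T → Fin n → Fin k) := by
          rw [Fintype.card_fun, Fintype.card_fun]; simp
  have hex : ∃ F : Fin T → Fin n → Fin k, F ∉ bad := by
    by_contra h
    push_neg at h
    have : bad = univ := eq_univ_iff_forall.mpr h
    rw [this, card_univ] at hcard
    exact lt_irrefl _ hcard
  obtain ⟨F, hF⟩ := hex
  refine ⟨T, F, le_refl _, ?_⟩
  intro A hAk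
  have hFbad : ¬ ∃ A ∈ powersetCard k (univ : Finset (Fin n)), ∀ t, ¬ Set.InjOn (F t) ↑A := by
    intro hc
    exact hF (by rw [hbad, mem_filter]; exact ⟨mem_univ _, hc⟩)
  push_neg at hFbad
  have := hFbad A (mem_powersetCard_univ.mpr hAk)
  exact this
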